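/- arXiv:0704.0736 — 2 statements merged into one kernel-verified Lean document; each statement's English description precedes it below -/
import Mathlib

section
/- For every j ∈ ℤ, V_j ⊆ V_{j+1}; that is, the spaces V_j defined from the refinable function φ form an increasing chain of closed subspaces of L²(ℚ_2, μ). -/
open MeasureTheory

/-- The refinable function: the indicator of `ℤ_2` inside `ℚ_[2]`. -/
noncomputable def phi2 : ℚ_[2] → ℂ :=
  Set.indicator {x : ℚ_[2] | ‖x‖ ≤ 1} 1

/-- The set `I_2` of fractional-part representatives of `ℚ_2/ℤ_2`. -/
def I2 : Set ℚ_[2] :=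
  {a | ∃ γ m : ℕ, m < 2 ^ γ ∧ a = (m : ℚ_[2]) / (2 : ℚ_[2]) ^ γ}

/-- The space `V_j`: the closed `ℂ`-linear span in `L²(ℚ_2, μ)` of the functions
`x ↦ φ(2^{-j} x − a)`, `a ∈ I_2`. -/
noncomputable def Vsp [MeasurableSpace ℚ_[2]] (μ : Measure ℚ_[2]) (j : ℤ) :
    Submodule ℂ (Lp ℂ 2 μ) :=
  (Submodule.span ℂ {f : Lp ℂ 2 μ | ∃ a ∈ I2,
    (f : ℚ_[2] → ℂ) =ᵐ[μ] fun x => phi2 ((2 : ℚ_[2]) ^ (-j) * x - a)}).topologicalClosure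

lemma two_norm : ‖(2 : ℚ_[2])‖ = 2⁻¹ := by
  have h := @Padic.norm_p 2 _
  norm_num at h
  simpa using h

lemma phi2_def (y : ℚ_[2]) : phi2 y = if ‖y‖ ≤ 1 then 1 else 0 := by
  by_cases h : ‖y‖ ≤ 1 <;> simp [phi2, Set.indicator, h]

lemma norm_sub_one_key (y : ℚ_[2]) (h1 : ‖y‖ ≤ 1) (h2 : ¬ ‖y‖ ≤ 2⁻¹) :
    ‖y - 1‖ ≤ 2⁻¹ := by
  set z : ℤ_[2] := ⟨y, h1⟩ with hz
  have hspec := PadicInt.appr_spec 1 z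
  have hlt := PadicInt.appr_lt z 1
  rw [Ideal.mem_span_singleton] at hspec
  obtain ⟨c, hc⟩ := hspec
  have hnorm2 : ‖(2 : ℤ_[2])‖ = 2⁻¹ := by
    rw [PadicInt.norm_def]; exact_mod_cast two_norm
  interval_cases h : z.appr 1
  · exfalso
    apply h2
    have : z = 2 * c := by simpa [h] using hc
    have : ‖z‖ ≤ 2⁻¹ := by
      rw [this, norm_mul, hnorm2]
      calc 2⁻¹ * ‖c‖ ≤ 2⁻¹ * 1 := by
            exact mul_le_mul_of_nonneg_left (PadicInt.norm_le_one c) (by norm_num)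
        _ = 2⁻¹ := mul_one _
    simpa [PadicInt.norm_def, hz] using this
  · have hzc : z - 1 = 2 * c := by simpa [h] using hc
    have : ‖z - 1‖ ≤ 2⁻¹ := by
      rw [hzc, norm_mul, hnorm2]
      calc 2⁻¹ * ‖c‖ ≤ 2⁻¹ * 1 := by
            exact mul_le_mul_of_nonneg_left (PadicInt.norm_le_one c) (by norm_num)
        _ = 2⁻¹ := mul_one _
    rw [PadicInt.norm_def, PadicInt.coe_sub, PadicInt.coe_one] at this
    exact this

lemma norm_sub_one_of_ne (y : ℚ_[2]) (h : ‖y‖ ≠ 1) : ‖y - 1‖ = max ‖y‖ 1 := by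
  have : y - 1 = y + (-1) := by ring
  rw [this, Padic.add_eq_max_of_ne (by simpa using h), norm_neg, norm_one]

lemma phi2_split (y : ℚ_[2]) : phi2 y = phi2 (y / 2) + phi2 (y / 2 - 2⁻¹) := by
  have e1 : ‖y / 2‖ = 2 * ‖y‖ := by
    rw [norm_div, two_norm]; field_simp
  have e2 : ‖y / 2 - 2⁻¹‖ = 2 * ‖y - 1‖ := by
    have : y / 2 - 2⁻¹ = (y - 1) / 2 := by ring
    rw [this, norm_div, two_norm]; field_simp
  rw [phi2_def, phi2_def, phi2_def, e1, e2]
  by_cases hA : ‖y‖ ≤ 2⁻¹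
  · have hB : ‖y‖ ≤ 1 := hA.trans (by norm_num)
    have hne : ‖y‖ ≠ 1 := by intro h; rw [h] at hA; norm_num at hA
    have h1 : ‖y - 1‖ = 1 := by
      rw [norm_sub_one_of_ne y hne, max_eq_right hB]
    have c1 : 2 * ‖y‖ ≤ 1 := by
      rw [show (1:ℝ) = 2 * 2⁻¹ by norm_num]
      exact mul_le_mul_of_nonneg_left hA (by norm_num)
    have c2 : ¬ (2 * ‖y - 1‖ ≤ 1) := by rw [h1]; norm_num
    simp [hB, c1, c2]
  · by_cases hB : ‖y‖ ≤ 1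
    · have h1 : ‖y - 1‖ ≤ 2⁻¹ := norm_sub_one_key y hB hA
      have c1 : ¬ (2 * ‖y‖ ≤ 1) := by
        intro h; apply hA; linarith
      have c2 : 2 * ‖y - 1‖ ≤ 1 := by
        rw [show (1:ℝ) = 2 * 2⁻¹ by norm_num]
        exact mul_le_mul_of_nonneg_left h1 (by norm_num)
      simp [hB, c1, c2]
    · have hgt : 1 < ‖y‖ := lt_of_not_ge hB
      have hne : ‖y‖ ≠ 1 := ne_of_gt hgt
      have h1 : ‖y - 1‖ = ‖y‖ := by
        rw [norm_sub_one_of_ne y hne, max_eq_left hgt.le]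
      have c1 : ¬ (2 * ‖y‖ ≤ 1) := by intro h; linarith
      have c2 : ¬ (2 * ‖y - 1‖ ≤ 1) := by rw [h1]; intro h; linarith
      simp [hB, c1, c2]

lemma ball_compact : IsCompact {y : ℚ_[2] | ‖y‖ ≤ 1} := by
  have : {y : ℚ_[2] | ‖y‖ ≤ 1} = Metric.closedBall 0 1 := by
    ext y; simp [Metric.mem_closedBall, dist_eq_norm]
  rw [this]
  exact isCompact_closedBall 0 1

lemma set_compact (c b : ℚ_[2]) (hc : c ≠ 0) :
    IsCompact {x : ℚ_[2] | ‖c * x - b‖ ≤ 1} := by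
  have himg : {x : ℚ_[2] | ‖c * x - b‖ ≤ 1}
      = (fun y => c⁻¹ * (y + b)) '' {y : ℚ_[2] | ‖y‖ ≤ 1} := by
    ext x
    simp only [Set.mem_setOf_eq, Set.mem_image]
    constructor
    · intro h
      exact ⟨c * x - b, h, by field_simp; ring⟩
    · rintro ⟨y, hy, rfl⟩
      have : c * (c⁻¹ * (y + b)) - b = y := by field_simp; ring
      rwa [this]
  rw [himg]
  exact ball_compact.image (continuous_const.mul (continuous_id.add continuous_const))

lemma set_closed (c b : ℚ_[2]) : IsClosed {x : ℚ_[2] | ‖c * x - b‖ ≤ 1} := by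
  have : {x : ℚ_[2] | ‖c * x - b‖ ≤ 1}
      = (fun x => c * x - b) ⁻¹' {y : ℚ_[2] | ‖y‖ ≤ 1} := rfl
  rw [this]
  exact (isClosed_le continuous_norm continuous_const).preimage
    ((continuous_const.mul continuous_id).sub continuous_const)

theorem Vsp_mono [MeasurableSpace ℚ_[2]] [BorelSpace ℚ_[2]]
    (μ : Measure ℚ_[2]) [μ.IsAddHaarMeasure]
    (hμ : μ {x : ℚ_[2] | ‖x‖ ≤ 1} = 1) (j : ℤ) :
    Vsp μ j ≤ Vsp μ (j + 1) := by
  apply Submodule.topologicalClosure_minimal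
  · rw [Submodule.span_le]
    rintro f ⟨a, haI, hf⟩
    set c : ℚ_[2] := (2 : ℚ_[2]) ^ (-(j + 1)) with hcdef
    have h2ne : (2 : ℚ_[2]) ≠ 0 := by
      intro h
      have := two_norm
      rw [h] at this; simp at this
    have hc : c ≠ 0 := zpow_ne_zero _ h2ne
    set b₁ : ℚ_[2] := a / 2 with hb1
    set b₂ : ℚ_[2] := a / 2 + 2⁻¹ with hb2
    -- the key pointwise identity
    have hsplit : ∀ x : ℚ_[2],
        phi2 ((2 : ℚ_[2]) ^ (-j) * x - a)
          = phi2 (c * x - b₁) + phi2 (c * x - b₂) := by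
      intro x
      have hcc : c = (2 : ℚ_[2]) ^ (-j) / 2 := by
        rw [hcdef, neg_add, zpow_add₀ h2ne, zpow_neg_one]
        field_simp
      have h1 : c * x - b₁ = ((2 : ℚ_[2]) ^ (-j) * x - a) / 2 := by
        rw [hcc, hb1]; ring
      have h2 : c * x - b₂ = ((2 : ℚ_[2]) ^ (-j) * x - a) / 2 - 2⁻¹ := by
        rw [hcc, hb2]; ring
      rw [h1, h2]
      exact phi2_split _
    -- the two sets
    have hmeas : ∀ b : ℚ_[2], MeasurableSet {x : ℚ_[2] | ‖c * x - b‖ ≤ 1} :=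
      fun b => (set_closed c b).measurableSet
    have hfin : ∀ b : ℚ_[2], μ {x : ℚ_[2] | ‖c * x - b‖ ≤ 1} ≠ ⊤ :=
      fun b => ((set_compact c b hc).measure_lt_top).ne
    set G₁ := indicatorConstLp 2 (hmeas b₁) (hfin b₁) (1 : ℂ) with hG1
    set G₂ := indicatorConstLp 2 (hmeas b₂) (hfin b₂) (1 : ℂ) with hG2
    have hind : ∀ b : ℚ_[2],
        Set.indicator {x : ℚ_[2] | ‖c * x - b‖ ≤ 1} (fun _ => (1 : ℂ))
          = fun x => phi2 (c * x - b) := by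
      intro b
      funext x
      by_cases h : ‖c * x - b‖ ≤ 1
      · simp [Set.indicator, h, phi2_def]
      · simp [Set.indicator, h, phi2_def]
    -- membership of generators
    have hgen : ∀ b : ℚ_[2], b ∈ I2 →
        (indicatorConstLp 2 (hmeas b) (hfin b) (1 : ℂ)) ∈ Vsp μ (j + 1) := by
      intro b hb
      apply Submodule.le_topologicalClosure
      apply Submodule.subset_span
      refine ⟨b, hb, ?_⟩
      calc (indicatorConstLp 2 (hmeas b) (hfin b) (1 : ℂ) : ℚ_[2] → ℂ)
          =ᵐ[μ] Set.indicator {x : ℚ_[2] | ‖c * x - b‖ ≤ 1} (fun _ => (1 : ℂ)) :=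
            indicatorConstLp_coeFn
        _ = fun x => phi2 (c * x - b) := hind b
    -- b₁, b₂ ∈ I2
    obtain ⟨γ, m, hm, ha⟩ := haI
    have hb1I : b₁ ∈ I2 := by
      refine ⟨γ + 1, m, lt_trans hm (by rw [pow_succ]; omega), ?_⟩
      rw [hb1, ha, pow_succ]
      ring
    have hb2I : b₂ ∈ I2 := by
      refine ⟨γ + 1, m + 2 ^ γ, by rw [pow_succ]; omega, ?_⟩
      rw [hb2, ha, pow_succ]
      push_cast
      have h2γ : ((2 : ℚ_[2]) ^ γ) ≠ 0 := pow_ne_zero _ h2ne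
      field_simp
    -- f = G₁ + G₂
    have hfeq : f = G₁ + G₂ := by
      apply Lp.ext
      have hc1 : (G₁ : ℚ_[2] → ℂ) =ᵐ[μ] fun x => phi2 (c * x - b₁) := by
        calc (G₁ : ℚ_[2] → ℂ)
            =ᵐ[μ] Set.indicator {x : ℚ_[2] | ‖c * x - b₁‖ ≤ 1} (fun _ => (1 : ℂ)) :=
              indicatorConstLp_coeFn
          _ = fun x => phi2 (c * x - b₁) := hind b₁
      have hc2 : (G₂ : ℚ_[2] → ℂ) =ᵐ[μ] fun x => phi2 (c * x - b₂) := by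
        calc (G₂ : ℚ_[2] → ℂ)
            =ᵐ[μ] Set.indicator {x : ℚ_[2] | ‖c * x - b₂‖ ≤ 1} (fun _ => (1 : ℂ)) :=
              indicatorConstLp_coeFn
          _ = fun x => phi2 (c * x - b₂) := hind b₂
      calc (f : ℚ_[2] → ℂ)
          =ᵐ[μ] fun x => phi2 ((2 : ℚ_[2]) ^ (-j) * x - a) := hf
        _ = fun x => phi2 (c * x - b₁) + phi2 (c * x - b₂) := by
            funext x; exact hsplit x
        _ =ᵐ[μ] (G₁ : ℚ_[2] → ℂ) + (G₂ : ℚ_[2] → ℂ) := by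
            filter_upwards [hc1, hc2] with x h1 h2
            simp [h1, h2]
        _ =ᵐ[μ] ((G₁ + G₂ : Lp ℂ 2 μ) : ℚ_[2] → ℂ) := (Lp.coeFn_add G₁ G₂).symm
    rw [hfeq]
    exact Submodule.add_mem _ (hgen b₁ hb1I) (hgen b₂ hb2I)
  · exact Submodule.isClosed_topologicalClosure _
end

section
/- The union ∪_{j∈ℤ} V_j is dense in L²(ℚ_2, μ); equivalently, the ℂ-linear span of the set of functions { x ↦ φ(2^{-j} x − a) : j ∈ ℤ, a ∈ I_2 } is dense in L²(ℚ_2, μ). -/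
open MeasureTheory

open scoped ENNReal NNReal
open Set Metric

namespace VspAux

lemma norm_two_zpow (j : ℤ) : ‖((2:ℚ_[2]) ^ j)‖ = (2:ℝ) ^ (-j) := by
  have := Padic.norm_p_zpow (p := 2) j
  push_cast at this
  exact this

/-- The closed ball of radius `2^{-j}` around `c`. -/
noncomputable def Bll (c : ℚ_[2]) (j : ℤ) : Set ℚ_[2] := Metric.closedBall c ((2:ℝ) ^ (-j))

lemma mem_Bll {x c : ℚ_[2]} {j : ℤ} : x ∈ Bll c j ↔ ‖x - c‖ ≤ (2:ℝ) ^ (-j) := by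
  simp [Bll, Metric.mem_closedBall, dist_eq_norm]

lemma phi2_eq (j : ℤ) (a x : ℚ_[2]) :
    phi2 ((2:ℚ_[2]) ^ (-j) * x - a) = Set.indicator (Bll ((2:ℚ_[2])^j * a) j) 1 x := by
  classical
  have key : ‖(2:ℚ_[2]) ^ (-j) * x - a‖ ≤ 1 ↔ x ∈ Bll ((2:ℚ_[2])^j * a) j := by
    have h2 : (2:ℚ_[2]) ^ (-j) * x - a = (2:ℚ_[2]) ^ (-j) * (x - (2:ℚ_[2])^j * a) := by
      rw [mul_sub, ← mul_assoc, ← zpow_add₀ (two_ne_zero), neg_add_cancel, zpow_zero, one_mul]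
    rw [h2, mem_Bll, norm_mul, norm_two_zpow, neg_neg]
    rw [← le_div_iff₀' (by positivity)]
    rw [one_div, ← zpow_neg]
  rw [phi2, Set.indicator_apply, Set.indicator_apply]
  simp only [Set.mem_setOf_eq, key, Pi.one_apply]

end VspAux

namespace VspAux2
open VspAux

lemma zero_mem_I2 : (0:ℚ_[2]) ∈ I2 := ⟨0, 0, by norm_num⟩

lemma exists_I2_near (y : ℚ_[2]) : ∃ a ∈ I2, ‖y - a‖ ≤ 1 := by
  obtain ⟨γ, hγ⟩ : ∃ γ : ℕ, ‖y‖ ≤ (2:ℝ) ^ γ := by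
    obtain ⟨n, hn⟩ := exists_nat_gt ‖y‖
    exact ⟨n, hn.le.trans (by exact_mod_cast Nat.le_of_lt (Nat.lt_two_pow_self (n := n)))⟩
  have hz : ‖(2:ℚ_[2]) ^ (γ:ℤ) * y‖ ≤ 1 := by
    rw [norm_mul, norm_two_zpow]
    calc (2:ℝ)^(-(γ:ℤ)) * ‖y‖ ≤ (2:ℝ)^(-(γ:ℤ)) * (2:ℝ)^(γ:ℤ) := by
          refine mul_le_mul_of_nonneg_left ?_ (by positivity)
          exact_mod_cast hγ
      _ = 1 := by rw [← zpow_add₀ (two_ne_zero (α := ℝ))]; norm_num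
  set z : ℤ_[2] := ⟨(2:ℚ_[2]) ^ (γ:ℤ) * y, hz⟩ with hzdef
  set m : ℕ := z.appr γ with hm
  refine ⟨(m : ℚ_[2]) / (2:ℚ_[2]) ^ γ, ⟨γ, m, PadicInt.appr_lt z γ, rfl⟩, ?_⟩
  have hspec : ‖z - (m : ℤ_[2])‖ ≤ (2:ℝ) ^ (-(γ:ℤ)) := by
    have := (PadicInt.norm_le_pow_iff_mem_span_pow (z - (m:ℤ_[2])) γ).mpr (PadicInt.appr_spec γ z)
    exact_mod_cast this
  have hcoe : ‖((2:ℚ_[2]) ^ (γ:ℤ) * y - (m : ℚ_[2]))‖ ≤ (2:ℝ) ^ (-(γ:ℤ)) := by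
    have : ((z - (m:ℤ_[2]) : ℤ_[2]) : ℚ_[2]) = (2:ℚ_[2]) ^ (γ:ℤ) * y - (m : ℚ_[2]) := by
      push_cast [hzdef]
      rfl
    rw [← this, ← PadicInt.norm_def]
    exact hspec
  have h2γ : ((2:ℚ_[2]) ^ γ : ℚ_[2]) ≠ 0 := pow_ne_zero γ two_ne_zero
  have hrw : y - (m : ℚ_[2]) / (2:ℚ_[2]) ^ γ
      = ((2:ℚ_[2]) ^ (γ:ℤ) * y - (m : ℚ_[2])) / (2:ℚ_[2]) ^ (γ:ℤ) := by
    field_simp [zpow_natCast]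
    simp only [zpow_natCast]
    ring
  rw [hrw, norm_div, norm_two_zpow, div_le_one (by positivity)]
  exact hcoe

end VspAux2

namespace VspAux3
open VspAux VspAux2

lemma half_mem_I2 {a : ℚ_[2]} (ha : a ∈ I2) : a / 2 ∈ I2 := by
  obtain ⟨γ, m, hm, rfl⟩ := ha
  refine ⟨γ + 1, m, ?_, ?_⟩
  · calc m < 2 ^ γ := hm
      _ ≤ 2 ^ (γ+1) := Nat.pow_le_pow_right (by norm_num) (by omega)
  · rw [pow_succ]
    field_simp

lemma half_add_mem_I2 {a : ℚ_[2]} (ha : a ∈ I2) : (a + 1) / 2 ∈ I2 := by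
  obtain ⟨γ, m, hm, rfl⟩ := ha
  refine ⟨γ + 1, m + 2 ^ γ, by omega, ?_⟩
  have h2γ : ((2:ℚ_[2]) ^ γ : ℚ_[2]) ≠ 0 := pow_ne_zero γ two_ne_zero
  push_cast
  rw [pow_succ]
  field_simp

lemma unit_sub_one {u : ℚ_[2]} (h : ‖u‖ = 1) : ‖u - 1‖ ≤ 2⁻¹ := by
  have hu1 : ‖u‖ ≤ 1 := h.le
  set z : ℤ_[2] := ⟨u, hu1⟩ with hz
  have hspec := PadicInt.appr_spec 1 z
  have hlt : z.appr 1 < 2 := by simpa using PadicInt.appr_lt z 1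
  have hnorm : ‖z - (z.appr 1 : ℤ_[2])‖ ≤ (2:ℝ) ^ (-(1:ℤ)) := by
    have := (PadicInt.norm_le_pow_iff_mem_span_pow (z - (z.appr 1 : ℤ_[2])) 1).mpr hspec
    exact_mod_cast this
  interval_cases h' : z.appr 1
  · exfalso
    rw [Nat.cast_zero, sub_zero, PadicInt.norm_def] at hnorm
    change ‖u‖ ≤ _ at hnorm
    rw [h] at hnorm
    norm_num at hnorm
  · have : ((z - (1 : ℤ_[2]) : ℤ_[2]) : ℚ_[2]) = u - 1 := by push_cast [hz]; rfl
    rw [← this, ← PadicInt.norm_def]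
    calc ‖z - 1‖ ≤ (2:ℝ) ^ (-(1:ℤ)) := by exact_mod_cast hnorm
      _ = 2⁻¹ := by norm_num

end VspAux3

namespace VspAux4
open VspAux VspAux2 VspAux3

lemma norm_two' : ‖(2:ℚ_[2])‖ = 2⁻¹ := by
  have := Padic.norm_p (p := 2)
  push_cast at this
  exact this

lemma norm_half : ‖(2:ℚ_[2])⁻¹‖ = 2 := by
  rw [norm_inv, norm_two']
  norm_num

lemma norm_eq_two {t : ℚ_[2]} (h1 : 1 < ‖t‖) (h2 : ‖t‖ ≤ 2) : ‖t‖ = 2 := by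
  have ht : t ≠ 0 := by
    rintro rfl
    norm_num at h1
  rw [Padic.norm_eq_zpow_neg_valuation ht] at h1 h2 ⊢
  have hmono : StrictMono (fun n : ℤ => ((2:ℕ):ℝ) ^ n) :=
    zpow_right_strictMono₀ (by norm_num)
  have hv1 : (0:ℤ) < -t.valuation := by
    by_contra hle
    push_neg at hle
    have := hmono.monotone hle
    simp only [zpow_zero] at this
    exact absurd h1 (not_lt.mpr this)
  have hv2 : -t.valuation ≤ 1 := by
    by_contra hle
    push_neg at hle
    have := hmono hle
    simp only [zpow_one] at this
    push_cast at this h2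
    linarith
  have : -t.valuation = 1 := by omega
  rw [this]
  norm_num

lemma phi2_double (t : ℚ_[2]) : phi2 (2 * t) = phi2 t + phi2 (t - 2⁻¹) := by
  classical
  have hnorm2t : ‖2 * t‖ = 2⁻¹ * ‖t‖ := by rw [norm_mul, norm_two']
  simp only [phi2, Set.indicator_apply, Set.mem_setOf_eq, Pi.one_apply]
  by_cases h1 : ‖t‖ ≤ 1
  · -- phi2 (2t) = 1, phi2 t = 1, phi2 (t - 1/2) = 0
    have hA : ‖2 * t‖ ≤ 1 := by rw [hnorm2t]; nlinarith [norm_nonneg t]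
    have hC : ¬ ‖t - 2⁻¹‖ ≤ 1 := by
      have hne : ‖t‖ ≠ ‖-(2:ℚ_[2])⁻¹‖ := by rw [norm_neg, norm_half]; intro h; rw [h] at h1; linarith
      have : ‖t - 2⁻¹‖ = max ‖t‖ ‖-(2:ℚ_[2])⁻¹‖ := by
        rw [sub_eq_add_neg]
        exact Padic.add_eq_max_of_ne hne
      rw [this, norm_neg, norm_half]
      push_neg
      calc (1:ℝ) < 2 := by norm_num
        _ ≤ max ‖t‖ 2 := le_max_right _ _
    rw [if_pos hA, if_pos h1, if_neg hC, add_zero]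
  · push_neg at h1
    by_cases h2 : ‖t‖ ≤ 2
    · -- ‖t‖ = 2 : phi2(2t) = 1, phi2 t = 0, phi2(t-1/2) = 1
      have ht2 : ‖t‖ = 2 := norm_eq_two h1 h2
      have hA : ‖2 * t‖ ≤ 1 := by rw [hnorm2t, ht2]; norm_num
      have hu : ‖2 * t‖ = 1 := by rw [hnorm2t, ht2]; norm_num
      have hC : ‖t - 2⁻¹‖ ≤ 1 := by
        have : t - 2⁻¹ = 2⁻¹ * (2 * t - 1) := by ring
        rw [this, norm_mul, norm_half]
        have := unit_sub_one hu
        linarith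
      rw [if_pos hA, if_neg (not_le.mpr h1), if_pos hC, zero_add]
    · -- ‖t‖ > 2 : all zero
      push_neg at h2
      have hA : ¬ ‖2 * t‖ ≤ 1 := by rw [hnorm2t]; push_neg; linarith
      have hC : ¬ ‖t - 2⁻¹‖ ≤ 1 := by
        have hne : ‖t‖ ≠ ‖-(2:ℚ_[2])⁻¹‖ := by rw [norm_neg, norm_half]; linarith
        have : ‖t - 2⁻¹‖ = max ‖t‖ ‖-(2:ℚ_[2])⁻¹‖ := by
          rw [sub_eq_add_neg]; exact Padic.add_eq_max_of_ne hne
        rw [this, norm_neg, norm_half]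
        push_neg
        calc (1:ℝ) < ‖t‖ := h1
          _ ≤ max ‖t‖ 2 := le_max_left _ _
      rw [if_neg hA, if_neg (not_le.mpr h1), if_neg hC, add_zero]

lemma phi2_split (j : ℤ) (a x : ℚ_[2]) :
    phi2 ((2:ℚ_[2]) ^ (-j) * x - a)
      = phi2 ((2:ℚ_[2]) ^ (-(j+1)) * x - a / 2) + phi2 ((2:ℚ_[2]) ^ (-(j+1)) * x - (a+1) / 2) := by
  have key : (2:ℚ_[2]) ^ (-j) * x - a = 2 * ((2:ℚ_[2]) ^ (-(j+1)) * x - a / 2) := by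
    have : (2:ℚ_[2]) * (2:ℚ_[2]) ^ (-(j+1)) = (2:ℚ_[2]) ^ (-j) := by
      have h : (-(j+1) : ℤ) = -j + (-1) := by ring
      rw [h, zpow_add₀ (two_ne_zero : (2:ℚ_[2]) ≠ 0), zpow_neg_one, ← mul_assoc,
        mul_comm (2:ℚ_[2]), mul_assoc, mul_inv_cancel₀ (two_ne_zero : (2:ℚ_[2]) ≠ 0), mul_one]
    rw [mul_sub, ← mul_assoc, this]
    ring
  have key2 : (2:ℚ_[2]) ^ (-(j+1)) * x - (a+1) / 2
      = ((2:ℚ_[2]) ^ (-(j+1)) * x - a / 2) - 2⁻¹ := by ring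
  rw [key, key2, phi2_double]

end VspAux4

namespace VspM
open VspAux VspAux2 VspAux3 VspAux4

variable [MeasurableSpace ℚ_[2]] [BorelSpace ℚ_[2]]
variable (μ : Measure ℚ_[2]) [μ.IsAddHaarMeasure]

lemma Bll_meas (c : ℚ_[2]) (j : ℤ) : MeasurableSet (Bll c j) :=
  measurableSet_closedBall

lemma Bll_fin (c : ℚ_[2]) (j : ℤ) : μ (Bll c j) ≠ ⊤ :=
  (isCompact_closedBall c _).measure_lt_top.ne

/-- The indicator of the ball `Bll c j` as an element of `L²`. -/
noncomputable def indB (c : ℚ_[2]) (j : ℤ) : Lp ℂ 2 μ :=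
  indicatorConstLp 2 (Bll_meas c j) (Bll_fin μ c j) (1:ℂ)

/-- The span of all ball indicators. -/
noncomputable def SpanB : Submodule ℂ (Lp ℂ 2 μ) :=
  Submodule.span ℂ (Set.range fun p : ℚ_[2] × ℤ => indB μ p.1 p.2)

lemma indicatorConstLp_congr {s t : Set ℚ_[2]} (h : s = t) (hs : MeasurableSet s)
    (hμs : μ s ≠ ⊤) (ht : MeasurableSet t) (hμt : μ t ≠ ⊤) (c : ℂ) :
    indicatorConstLp 2 hs hμs c = indicatorConstLp 2 ht hμt c := by
  subst h; rfl

lemma smul_indicatorConstLp {s : Set ℚ_[2]} (hs : MeasurableSet s) (hμs : μ s ≠ ⊤) (c : ℂ) :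
    c • indicatorConstLp 2 hs hμs (1:ℂ) = indicatorConstLp 2 hs hμs c := by
  apply Lp.ext
  filter_upwards [Lp.coeFn_smul c (indicatorConstLp 2 hs hμs (1:ℂ)),
    indicatorConstLp_coeFn (p := 2) (hs := hs) (hμs := hμs) (c := (1:ℂ)),
    indicatorConstLp_coeFn (p := 2) (hs := hs) (hμs := hμs) (c := c)] with x h1 h2 h3
  rw [h1, Pi.smul_apply, h2, h3]
  by_cases hx : x ∈ s <;> simp [hx]

lemma indB_mem_Vsp (c : ℚ_[2]) (j : ℤ) : indB μ c j ∈ Vsp μ j := by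
  obtain ⟨a, ha, hnear⟩ := exists_I2_near ((2:ℚ_[2]) ^ (-j) * c)
  have hmem : (2:ℚ_[2]) ^ j * a ∈ Bll c j := by
    rw [mem_Bll]
    have : (2:ℚ_[2]) ^ j * a - c = -((2:ℚ_[2]) ^ j * ((2:ℚ_[2]) ^ (-j) * c - a)) := by
      rw [mul_sub, ← mul_assoc, ← zpow_add₀ (two_ne_zero : (2:ℚ_[2]) ≠ 0), add_neg_cancel,
        zpow_zero, one_mul]
      ring
    rw [this, norm_neg, norm_mul, norm_two_zpow]
    calc (2:ℝ) ^ (-j) * ‖(2:ℚ_[2]) ^ (-j) * c - a‖ ≤ (2:ℝ) ^ (-j) * 1 :=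
          mul_le_mul_of_nonneg_left hnear (by positivity)
      _ = (2:ℝ) ^ (-j) := mul_one _
  have hball : Bll c j = Bll ((2:ℚ_[2]) ^ j * a) j :=
    IsUltrametricDist.closedBall_eq_of_mem hmem
  apply Submodule.le_topologicalClosure
  apply Submodule.subset_span
  refine ⟨a, ha, ?_⟩
  filter_upwards [indicatorConstLp_coeFn (p := 2) (hs := Bll_meas c j) (hμs := Bll_fin μ c j)
    (c := (1:ℂ))] with x hx
  simp only [indB]
  rw [hx, phi2_eq, hball]
  rfl

lemma Vsp_mono : Monotone (Vsp μ) := by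
  apply monotone_int_of_le_succ
  intro j
  apply Submodule.topologicalClosure_minimal _ _ (Submodule.isClosed_topologicalClosure _)
  rw [Submodule.span_le]
  rintro f ⟨a, ha, hf⟩
  have h1 : indB μ ((2:ℚ_[2]) ^ (j+1) * (a/2)) (j+1) ∈ Vsp μ (j+1) := indB_mem_Vsp μ _ _
  have h2 : indB μ ((2:ℚ_[2]) ^ (j+1) * ((a+1)/2)) (j+1) ∈ Vsp μ (j+1) := indB_mem_Vsp μ _ _
  have key : f = indB μ ((2:ℚ_[2]) ^ (j+1) * (a/2)) (j+1)
      + indB μ ((2:ℚ_[2]) ^ (j+1) * ((a+1)/2)) (j+1) := by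
    apply Lp.ext
    filter_upwards [hf,
      Lp.coeFn_add (indB μ ((2:ℚ_[2]) ^ (j+1) * (a/2)) (j+1))
        (indB μ ((2:ℚ_[2]) ^ (j+1) * ((a+1)/2)) (j+1)),
      indicatorConstLp_coeFn (p := 2) (hs := Bll_meas ((2:ℚ_[2]) ^ (j+1) * (a/2)) (j+1))
        (hμs := Bll_fin μ _ _) (c := (1:ℂ)),
      indicatorConstLp_coeFn (p := 2) (hs := Bll_meas ((2:ℚ_[2]) ^ (j+1) * ((a+1)/2)) (j+1))
        (hμs := Bll_fin μ _ _) (c := (1:ℂ))] with x hfx haddx hx1 hx2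
    rw [hfx, haddx, Pi.add_apply]
    show phi2 _ = _
    rw [phi2_split j a x, phi2_eq, phi2_eq]
    simp only [indB]
    rw [hx1, hx2]
    rfl
  rw [key]
  exact Submodule.add_mem _ h1 h2

end VspM

namespace VspD
open VspAux VspAux2 VspAux3 VspAux4 VspM

def UL (L : List (Set ℚ_[2])) : Set ℚ_[2] := L.foldr (· ∪ ·) ∅

def GoodL (L : List (Set ℚ_[2])) : Prop := ∀ t ∈ L, (∃ c j, t = Bll c j) ∨ t = ∅

lemma UL_nil : UL [] = ∅ := rfl

lemma UL_cons (t : Set ℚ_[2]) (L : List (Set ℚ_[2])) : UL (t :: L) = t ∪ UL L := rfl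

lemma UL_inter (t : Set ℚ_[2]) (L : List (Set ℚ_[2])) :
    t ∩ UL L = UL (L.map (fun s => t ∩ s)) := by
  induction L with
  | nil => simp [UL_nil, UL]
  | cons s R ih => rw [List.map_cons, UL_cons, UL_cons, Set.inter_union_distrib_left, ih]

lemma good_inter {A B : Set ℚ_[2]} (hA : (∃ c j, A = Bll c j) ∨ A = ∅)
    (hB : (∃ c j, B = Bll c j) ∨ B = ∅) :
    (∃ c j, A ∩ B = Bll c j) ∨ A ∩ B = ∅ := by
  rcases hA with ⟨c, j, rfl⟩ | rfl
  · rcases hB with ⟨d, k, rfl⟩ | rfl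
    · rcases IsUltrametricDist.closedBall_subset_trichotomy c d ((2:ℝ)^(-j)) ((2:ℝ)^(-k)) with
        h | h | h
      · exact Or.inl ⟨c, j, Set.inter_eq_left.mpr h⟩
      · exact Or.inl ⟨d, k, Set.inter_eq_right.mpr h⟩
      · exact Or.inr (Set.disjoint_iff_inter_eq_empty.mp h)
    · exact Or.inr (Set.inter_empty _)
  · exact Or.inr (Set.empty_inter _)

variable [MeasurableSpace ℚ_[2]] [BorelSpace ℚ_[2]]
variable (μ : Measure ℚ_[2]) [μ.IsAddHaarMeasure]

lemma good_elem_meas {t : Set ℚ_[2]} (h : (∃ c j, t = Bll c j) ∨ t = ∅) :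
    MeasurableSet t ∧ μ t ≠ ⊤ := by
  rcases h with ⟨c, j, rfl⟩ | rfl
  · exact ⟨Bll_meas c j, Bll_fin μ c j⟩
  · simp

lemma good_meas {L : List (Set ℚ_[2])} (h : GoodL L) :
    MeasurableSet (UL L) ∧ μ (UL L) ≠ ⊤ := by
  induction L with
  | nil => simp [UL_nil]
  | cons t R ih =>
    have h1 := good_elem_meas μ (h t (List.mem_cons_self))
    have h2 := ih (fun s hs => h s (List.mem_cons_of_mem t hs))
    rw [UL_cons]
    refine ⟨h1.1.union h2.1, ?_⟩
    exact ((measure_union_le t (UL R)).trans_lt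
      (ENNReal.add_lt_top.mpr ⟨h1.2.lt_top, h2.2.lt_top⟩)).ne

lemma indLp_empty (hm : MeasurableSet (∅ : Set ℚ_[2])) (hf : μ (∅ : Set ℚ_[2]) ≠ ⊤) :
    indicatorConstLp 2 hm hf (1:ℂ) = 0 := by
  apply Lp.ext
  filter_upwards [indicatorConstLp_coeFn (p := 2) (hs := hm) (hμs := hf) (c := (1:ℂ)),
    Lp.coeFn_zero ℂ 2 μ] with x h1 h2
  rw [h1, h2]
  simp

lemma indLp_union {A B : Set ℚ_[2]} (hA : MeasurableSet A) (hB : MeasurableSet B)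
    (hfA : μ A ≠ ⊤) (hfB : μ B ≠ ⊤) (hU : MeasurableSet (A ∪ B)) (hfU : μ (A ∪ B) ≠ ⊤)
    (hI : MeasurableSet (A ∩ B)) (hfI : μ (A ∩ B) ≠ ⊤) :
    indicatorConstLp 2 hU hfU (1:ℂ)
      = indicatorConstLp 2 hA hfA 1 + indicatorConstLp 2 hB hfB 1
        - indicatorConstLp 2 hI hfI 1 := by
  apply Lp.ext
  filter_upwards [indicatorConstLp_coeFn (p := 2) (hs := hU) (hμs := hfU) (c := (1:ℂ)),
    indicatorConstLp_coeFn (p := 2) (hs := hA) (hμs := hfA) (c := (1:ℂ)),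
    indicatorConstLp_coeFn (p := 2) (hs := hB) (hμs := hfB) (c := (1:ℂ)),
    indicatorConstLp_coeFn (p := 2) (hs := hI) (hμs := hfI) (c := (1:ℂ)),
    Lp.coeFn_sub (indicatorConstLp 2 hA hfA (1:ℂ) + indicatorConstLp 2 hB hfB (1:ℂ))
      (indicatorConstLp 2 hI hfI (1:ℂ)),
    Lp.coeFn_add (indicatorConstLp 2 hA hfA (1:ℂ)) (indicatorConstLp 2 hB hfB (1:ℂ))]
    with x h0 h1 h2 h3 h4 h5
  rw [h0, h4, Pi.sub_apply, h5, Pi.add_apply, h1, h2, h3]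
  have := congrFun (Set.indicator_union_add_inter (fun _ => (1:ℂ)) A B) x
  simp only [Pi.add_apply] at this
  exact eq_sub_of_add_eq this

lemma indB_mem_SpanB (c : ℚ_[2]) (j : ℤ) : indB μ c j ∈ SpanB μ :=
  Submodule.subset_span ⟨(c, j), rfl⟩

lemma UL_mem_SpanB : ∀ (n : ℕ) (L : List (Set ℚ_[2])), GoodL L → L.length ≤ n →
    ∀ (hm : MeasurableSet (UL L)) (hf : μ (UL L) ≠ ⊤),
    indicatorConstLp 2 hm hf (1:ℂ) ∈ SpanB μ := by
  intro n
  induction n with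
  | zero =>
    intro L hG hlen hm hf
    have : L = [] := List.length_eq_zero_iff.mp (Nat.le_zero.mp hlen)
    subst this
    rw [indicatorConstLp_congr μ UL_nil hm hf MeasurableSet.empty (by simp),
      indLp_empty]
    exact Submodule.zero_mem _
  | succ n ih =>
    intro L hG hlen hm hf
    match L with
    | [] =>
      rw [indicatorConstLp_congr μ UL_nil hm hf MeasurableSet.empty (by simp),
        indLp_empty]
      exact Submodule.zero_mem _
    | t :: R =>
      have hGt := hG t (List.mem_cons_self)
      have hGR : GoodL R := fun s hs => hG s (List.mem_cons_of_mem t hs)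
      have hlenR : R.length ≤ n := by simpa using Nat.succ_le_succ_iff.mp hlen
      obtain ⟨htm, htf⟩ := good_elem_meas μ hGt
      obtain ⟨hRm, hRf⟩ := good_meas μ hGR
      -- the intersection list
      have hGint : GoodL (R.map (fun s => t ∩ s)) := by
        intro u hu
        obtain ⟨s, hs, rfl⟩ := List.mem_map.mp hu
        exact good_inter hGt (hGR s hs)
      have hlenint : (R.map (fun s => t ∩ s)).length ≤ n := by simpa using hlenR
      obtain ⟨hIm', hIf'⟩ := good_meas μ hGint
      have hIm : MeasurableSet (t ∩ UL R) := by rw [UL_inter]; exact hIm'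
      have hIf : μ (t ∩ UL R) ≠ ⊤ := by rw [UL_inter]; exact hIf'
      have hkey : indicatorConstLp 2 hm hf (1:ℂ)
          = indicatorConstLp 2 htm htf 1 + indicatorConstLp 2 hRm hRf 1
            - indicatorConstLp 2 hIm hIf 1 := by
        rw [indicatorConstLp_congr μ (UL_cons t R) hm hf (htm.union hRm)
          (by rw [← UL_cons t R]; exact hf)]
        exact indLp_union μ htm hRm htf hRf _ _ hIm hIf
      rw [hkey]
      apply Submodule.sub_mem
      · apply Submodule.add_mem
        · rcases hGt with ⟨c, j, rfl⟩ | rfl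
          · rw [show indicatorConstLp 2 htm htf (1:ℂ) = indB μ c j from rfl]
            exact indB_mem_SpanB μ c j
          · rw [indLp_empty]
            exact Submodule.zero_mem _
        · exact ih R hGR hlenR hRm hRf
      · rw [indicatorConstLp_congr μ (UL_inter t R) hIm hIf hIm' hIf']
        exact ih _ hGint hlenint hIm' hIf'

lemma UL_map_eq (f : ℚ_[2] → Set ℚ_[2]) (l : List ℚ_[2]) :
    UL (l.map f) = ⋃ x ∈ l, f x := by
  induction l with
  | nil => simp [UL_nil]
  | cons a l ih => simp [UL_cons, ih]

lemma exists_good_approx {s : Set ℚ_[2]} (hs : MeasurableSet s) (hf : μ s ≠ ⊤)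
    {ε : ℝ≥0∞} (hε : ε ≠ 0) :
    ∃ L : List (Set ℚ_[2]), GoodL L ∧ μ (symmDiff s (UL L)) < ε := by
  have hε2 : ε / 2 ≠ 0 := by
    simp only [ne_eq, ENNReal.div_eq_zero_iff, hε, false_or]
    norm_num
  obtain ⟨U, hsU, hUo, hUfin, hUd⟩ := hs.exists_isOpen_diff_lt hf hε2
  obtain ⟨K, hKs, hKc, hKlt⟩ := hs.exists_isCompact_lt_add hf hε2
  have hKd : μ (s \ K) < ε / 2 :=
    measure_diff_lt_of_lt_add hKc.isClosed.measurableSet.nullMeasurableSet hKs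
      (((measure_mono hKs).trans_lt hf.lt_top).ne) hKlt
  -- choose radii for the cover
  have hcov : ∀ x : ℚ_[2], x ∈ K → ∃ j : ℤ, Bll x j ⊆ U := by
    intro x hx
    obtain ⟨r, hr, hball⟩ := Metric.isOpen_iff.mp hUo x (hsU (hKs hx))
    obtain ⟨n, hn⟩ := exists_pow_lt_of_lt_one hr (by norm_num : (1/2:ℝ) < 1)
    refine ⟨(n:ℤ), ?_⟩
    refine (Metric.closedBall_subset_ball ?_).trans hball
    calc (2:ℝ) ^ (-(n:ℤ)) = (1/2) ^ n := by
          rw [zpow_neg, ← zpow_natCast]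
          simp
      _ < r := hn
  choose! j hj using hcov
  obtain ⟨t, ht1, ht2⟩ := hKc.elim_nhds_subcover (fun x => Bll x (j x)) (fun x hx =>
    (IsUltrametricDist.isOpen_closedBall x (by positivity)).mem_nhds
      (Metric.mem_closedBall_self (by positivity)))
  set L : List (Set ℚ_[2]) := t.toList.map (fun x => Bll x (j x)) with hL
  have hUL : UL L = ⋃ x ∈ t, Bll x (j x) := by
    rw [hL, UL_map_eq]
    ext y
    simp [Finset.mem_toList]
  refine ⟨L, ?_, ?_⟩
  · intro u hu
    obtain ⟨x, _, rfl⟩ := List.mem_map.mp hu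
    exact Or.inl ⟨x, j x, rfl⟩
  · have hKW : K ⊆ UL L := by rw [hUL]; exact ht2
    have hWU : UL L ⊆ U := by
      rw [hUL]
      exact Set.iUnion₂_subset fun x hx => hj x (ht1 x hx)
    have hsd : symmDiff s (UL L) ⊆ (s \ K) ∪ (U \ s) := by
      rw [Set.symmDiff_def]
      apply Set.union_subset_union
      · exact Set.diff_subset_diff_right hKW
      · exact Set.diff_subset_diff_left hWU
    calc μ (symmDiff s (UL L)) ≤ μ ((s \ K) ∪ (U \ s)) := measure_mono hsd
      _ ≤ μ (s \ K) + μ (U \ s) := measure_union_le _ _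
      _ < ε / 2 + ε / 2 := ENNReal.add_lt_add hKd hUd
      _ = ε := ENNReal.add_halves ε

lemma indLp_mem_closure {s : Set ℚ_[2]} (hs : MeasurableSet s) (hf : μ s ≠ ⊤) (c : ℂ) :
    indicatorConstLp 2 hs hf c ∈ closure (SpanB μ : Set (Lp ℂ 2 μ)) := by
  rw [Metric.mem_closure_iff]
  intro ε hε
  set δ : ℝ := ε / (‖c‖ + 1) with hδdef
  have hδ : 0 < δ := div_pos hε (by positivity)
  obtain ⟨L, hG, hμL⟩ := exists_good_approx μ hs hf
    (ε := ENNReal.ofReal (δ^2)) (by positivity)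
  obtain ⟨hLm, hLf⟩ := good_meas μ hG
  refine ⟨indicatorConstLp 2 hLm hLf c, ?_, ?_⟩
  · rw [← smul_indicatorConstLp]
    exact Submodule.smul_mem _ c (UL_mem_SpanB μ L.length L hG le_rfl hLm hLf)
  · rw [dist_indicatorConstLp_eq_norm, norm_indicatorConstLp (by norm_num) (by norm_num)]
    have htoReal : (μ (symmDiff s (UL L))).toReal < δ^2 := by
      apply ENNReal.toReal_lt_of_lt_ofReal hμL
    have hX : (0:ℝ) ≤ (μ (symmDiff s (UL L))).toReal := ENNReal.toReal_nonneg
    have hpow : (μ (symmDiff s (UL L))).toReal ^ (1 / (2:ℝ≥0∞).toReal) < δ := by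
      have h2 : (1 / (2:ℝ≥0∞).toReal) = (1/2 : ℝ) := by norm_num
      rw [h2, ← Real.sqrt_eq_rpow]
      calc Real.sqrt (μ (symmDiff s (UL L))).toReal < Real.sqrt (δ^2) :=
            Real.sqrt_lt_sqrt hX htoReal
        _ = δ := by rw [Real.sqrt_sq hδ.le]
    calc ‖c‖ * (μ (symmDiff s (UL L))).toReal ^ (1 / (2:ℝ≥0∞).toReal)
        ≤ ‖c‖ * δ := by
          apply mul_le_mul_of_nonneg_left hpow.le (norm_nonneg c)
      _ < (‖c‖ + 1) * δ := by nlinarith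
      _ = ε := by
          rw [hδdef]
          field_simp

lemma dense_SpanB (f : Lp ℂ 2 μ) : f ∈ closure (SpanB μ : Set (Lp ℂ 2 μ)) := by
  have hcoe : closure (SpanB μ : Set (Lp ℂ 2 μ)) = ↑(SpanB μ).topologicalClosure :=
    (Submodule.topologicalClosure_coe _).symm
  refine Lp.induction (by norm_num : (2:ℝ≥0∞) ≠ ⊤)
    (fun f => f ∈ closure (SpanB μ : Set (Lp ℂ 2 μ))) ?_ ?_ ?_ f
  · intro c s hs hμs
    rw [Lp.simpleFunc.coe_indicatorConst]
    exact indLp_mem_closure μ hs hμs.ne c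
  · intro f g hf hg _ hfm hgm
    rw [hcoe] at hfm hgm ⊢
    exact Submodule.add_mem _ hfm hgm
  · exact isClosed_closure

end VspD

theorem Vsp_union_dense [MeasurableSpace ℚ_[2]] [BorelSpace ℚ_[2]]
    (μ : Measure ℚ_[2]) [μ.IsAddHaarMeasure]
    (hμ : μ {x : ℚ_[2] | ‖x‖ ≤ 1} = 1) :
    Dense (⋃ j : ℤ, (Vsp μ j : Set (Lp ℂ 2 μ))) := by
  have hdir : Directed (· ≤ ·) (Vsp μ) := (VspM.Vsp_mono μ).directed_le
  rw [← Submodule.coe_iSup_of_directed _ hdir, dense_iff_closure_eq, Set.eq_univ_iff_forall]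
  intro f
  have hle : VspM.SpanB μ ≤ ⨆ j, Vsp μ j := by
    rw [VspM.SpanB, Submodule.span_le]
    rintro _ ⟨⟨c, j⟩, rfl⟩
    exact Submodule.mem_iSup_of_mem j (VspM.indB_mem_Vsp μ c j)
  exact closure_mono hle (VspD.dense_SpanB μ f)
end
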